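/- arXiv:1606.02011 — 2 statements merged into one kernel-verified Lean document; each statement's English description precedes it below -/
import Mathlib

section
/- Suppose f₀(x ∣ θ) = h((θ̂(x) − θ)ᵀΣ⁻¹(θ̂(x) − θ))·u(x) where h : [0,∞) → [0,∞) is decreasing and Σ is positive definite, and u(x) ≥ 0. If t̂ is the projection of t onto a closed convex set C containing θ̂(x) (with respect to the Σ⁻¹ inner product), then f₀(x ∣ t̂) ≥ f₀(x ∣ t). -/
/-- Suppose f₀(x ∣ θ) = h((θ̂(x) − θ)ᵀΣ⁻¹(θ̂(x) − θ))·u(x), with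
h : [0,∞) → [0,∞) decreasing, Σ positive definite and u(x) ≥ 0.  If t̂ is the projection
of t onto a closed convex set C containing θ̂(x) (w.r.t. the Σ⁻¹ inner product, i.e.
⟨t − t̂, x − t̂⟩_{Σ⁻¹} ≤ 0 for all x ∈ C), then f₀(x ∣ t̂) ≥ f₀(x ∣ t). -/
theorem stmt1 (d : ℕ) (S : Matrix (Fin d) (Fin d) ℝ) (hS : S.PosDef)
    (h : ℝ → ℝ) (hanti : AntitoneOn h (Set.Ici 0)) (hnn : ∀ z ∈ Set.Ici (0 : ℝ), 0 ≤ h z)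
    (ux : ℝ) (hux : 0 ≤ ux)
    (θhatx : Fin d → ℝ)
    (f : (Fin d → ℝ) → ℝ)
    (hf : ∀ θ, f θ = h (dotProduct (θhatx - θ) ((S⁻¹).mulVec (θhatx - θ))) * ux)
    (C : Set (Fin d → ℝ)) (hCclosed : IsClosed C) (hCconv : Convex ℝ C)
    (hθC : θhatx ∈ C)
    (t that : Fin d → ℝ) (hthatC : that ∈ C)
    (hproj : ∀ x ∈ C, dotProduct (t - that) ((S⁻¹).mulVec (x - that)) ≤ 0) :
    f t ≤ f that := by
  set A := S⁻¹ with hA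
  have hApd : A.PosDef := hS.inv
  have hQnn : ∀ v : Fin d → ℝ, 0 ≤ dotProduct v (A.mulVec v) := by
    intro v
    have := hApd.posSemidef.dotProduct_mulVec_nonneg v
    simpa using this
  set a := θhatx - that with ha
  set b := t - that with hb
  have hsymm : dotProduct a (A.mulVec b) = dotProduct b (A.mulVec a) := by
    rw [Matrix.dotProduct_mulVec, ← Matrix.mulVec_transpose]
    have hT : A.transpose = A := by
      have hH := hApd.isHermitian
      rwa [Matrix.IsHermitian, Matrix.conjTranspose_eq_transpose_of_trivial] at hH
    rw [hT, dotProduct_comm]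
  have hcross : dotProduct b (A.mulVec a) ≤ 0 := hproj θhatx hθC
  have hab : θhatx - t = a - b := by simp [ha, hb]
  have hexp : dotProduct (a - b) (A.mulVec (a - b)) =
      dotProduct a (A.mulVec a) - 2 * dotProduct b (A.mulVec a)
        + dotProduct b (A.mulVec b) := by
    simp [Matrix.mulVec_sub, sub_dotProduct, dotProduct_sub, hsymm]
    ring
  have hle : dotProduct a (A.mulVec a) ≤
      dotProduct (a - b) (A.mulVec (a - b)) := by
    rw [hexp]
    nlinarith [hQnn b]
  rw [hf t, hf that, hab]
  have hh := hanti (Set.mem_Ici.2 (hQnn a)) (Set.mem_Ici.2 (hQnn (a - b))) hle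
  exact mul_le_mul_of_nonneg_right hh hux
end

section
/- Suppose for each j = 1,…,p the density satisfies f₀(X_j ∣ θ) = h_j((θ̂_j − θ)ᵀΣ⁻¹(θ̂_j − θ))·u_j with h_j : [0,∞) → [0,∞) antitone, Σ positive definite, and u_j ≥ 0, and set 𝒯₀ = conv(θ̂₁,…,θ̂_p). Then for any finitely supported probability measure G on ℝ^d there exists a finitely supported probability measure G̃ on 𝒯₀ with ℓ(G̃) ≤ ℓ(G), where ℓ(G) = −(1/p) Σ_j log ∫ f₀(X_j ∣ θ) dG(θ). Consequently inf over all finitely supported probability measures of ℓ equals the inf over finitely supported measures on 𝒯₀. -/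
private lemma auxProjStmt16 {F : Type*} [NormedAddCommGroup F] [InnerProductSpace ℝ F]
    [FiniteDimensional ℝ F] {A : Set F} (hfin : A.Finite) (hne : A.Nonempty) (x : F) :
    ∃ v ∈ convexHull ℝ A, ∀ a ∈ A,
      (inner ℝ (a - v) (a - v) : ℝ) ≤ inner ℝ (a - x) (a - x) := by
  haveI : CompleteSpace F := FiniteDimensional.complete ℝ F
  have hKconv : Convex ℝ (convexHull ℝ A) := convex_convexHull ℝ A
  have hKne : (convexHull ℝ A).Nonempty := hne.mono (subset_convexHull ℝ A)
  obtain ⟨v, hv, hvmin⟩ := exists_norm_eq_iInf_of_complete_convex hKne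
    (hfin.isCompact_convexHull ℝ).isComplete hKconv x
  refine ⟨v, hv, fun a ha => ?_⟩
  have hproj := (norm_eq_iInf_iff_real_inner_le_zero hKconv hv).mp hvmin
  have hab : (inner ℝ (a - v) (x - v) : ℝ) ≤ 0 := by
    rw [real_inner_comm]; exact hproj a (subset_convexHull ℝ A ha)
  rw [real_inner_self_eq_norm_sq, real_inner_self_eq_norm_sq]
  have hexp := norm_sub_sq_real (a - v) (x - v)
  rw [sub_sub_sub_cancel_right] at hexp
  nlinarith [sq_nonneg ‖x - v‖]

private lemma auxInnerNonnegStmt16 {F : Type*} [NormedAddCommGroup F]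
    [InnerProductSpace ℝ F] (x : F) : (0:ℝ) ≤ inner ℝ x x := real_inner_self_nonneg

private lemma sInfEqOfDomStmt16 (A B : Set ℝ) (hBA : B ⊆ A)
    (hdom : ∀ a ∈ A, ∃ b ∈ B, b ≤ a) : sInf A = sInf B := by
  rcases A.eq_empty_or_nonempty with hA | hA
  · have hB : B = ∅ := Set.subset_empty_iff.mp (by simpa [hA] using hBA)
    rw [hA, hB]
  by_cases hbdd : BddBelow B
  · have hbddA : BddBelow A := by
      obtain ⟨m, hm⟩ := hbdd
      exact ⟨m, fun a ha => by
        obtain ⟨b, hb, hba⟩ := hdom a ha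
        exact (hm hb).trans hba⟩
    have hBne : B.Nonempty := by
      obtain ⟨a, ha⟩ := hA
      obtain ⟨b, hb, _⟩ := hdom a ha
      exact ⟨b, hb⟩
    refine le_antisymm (csInf_le_csInf hbddA hBne hBA) (le_csInf hA fun a ha => ?_)
    obtain ⟨b, hb, hba⟩ := hdom a ha
    exact (csInf_le hbdd hb).trans hba
  · rw [Real.sInf_of_not_bddBelow (fun hA' => hbdd (hA'.mono hBA)),
      Real.sInf_of_not_bddBelow hbdd]
/-- Values of ℓ(G) over finitely supported probability measures with atoms in S and all
per-observation mixture likelihoods strictly positive (so that ℓ(G) is finite). -/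
def npmleValsPos (d p : ℕ) (f : Fin p → (Fin d → ℝ) → ℝ) (S : Set (Fin d → ℝ)) : Set ℝ :=
  {r | ∃ (m : ℕ) (w : Fin m → ℝ) (t : Fin m → (Fin d → ℝ)),
        (∀ k, 0 ≤ w k) ∧ (∑ k, w k) = 1 ∧ (∀ k, t k ∈ S) ∧
        (∀ j, 0 < ∑ k, w k * f j (t k)) ∧
        r = -(1 / (p : ℝ)) * ∑ j, Real.log (∑ k, w k * f j (t k))}

/-- Proposition 1 of Feng–Dicker: Suppose
f₀(X_j ∣ θ) = h_j((θ̂_j − θ)ᵀΣ⁻¹(θ̂_j − θ))·u_j with h_j : [0,∞) → [0,∞) antitone,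
Σ positive definite and u_j ≥ 0, and let 𝒯₀ = conv(θ̂₁,…,θ̂_p).  Then for every finitely
supported probability measure G (with ℓ(G) finite) there is a finitely supported
probability measure G̃ on 𝒯₀ with ℓ(G̃) ≤ ℓ(G); consequently the infimum of ℓ over all
finitely supported probability measures equals the infimum over those supported on 𝒯₀. -/
theorem stmt16 (d p : ℕ) (hp : 0 < p) (S : Matrix (Fin d) (Fin d) ℝ) (hS : S.PosDef)
    (θhat : Fin p → (Fin d → ℝ))
    (h : Fin p → ℝ → ℝ)
    (hanti : ∀ j, AntitoneOn (h j) (Set.Ici 0))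
    (hnn : ∀ j, ∀ z ∈ Set.Ici (0 : ℝ), 0 ≤ h j z)
    (u : Fin p → ℝ) (hu : ∀ j, 0 ≤ u j)
    (f : Fin p → (Fin d → ℝ) → ℝ)
    (hf : ∀ j θ, f j θ =
      h j (dotProduct (θhat j - θ) ((S⁻¹).mulVec (θhat j - θ))) * u j) :
    (∀ (q : ℕ) (w : Fin q → ℝ) (t : Fin q → (Fin d → ℝ)),
        (∀ k, 0 ≤ w k) → (∑ k, w k) = 1 →
        (∀ j, 0 < ∑ k, w k * f j (t k)) →
        ∃ ttil : Fin q → (Fin d → ℝ),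
          (∀ k, ttil k ∈ convexHull ℝ (Set.range θhat)) ∧
          (∀ j, 0 < ∑ k, w k * f j (ttil k)) ∧
          -(1 / (p : ℝ)) * ∑ j, Real.log (∑ k, w k * f j (ttil k)) ≤
            -(1 / (p : ℝ)) * ∑ j, Real.log (∑ k, w k * f j (t k))) ∧
      sInf (npmleValsPos d p f Set.univ) =
        sInf (npmleValsPos d p f (convexHull ℝ (Set.range θhat))) := by
  have hSinv : (S⁻¹).PosDef := hS.inv
  have main : ∀ (q : ℕ) (w : Fin q → ℝ) (t : Fin q → (Fin d → ℝ)),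
      (∀ k, 0 ≤ w k) → (∑ k, w k) = 1 →
      (∀ j, 0 < ∑ k, w k * f j (t k)) →
      ∃ ttil : Fin q → (Fin d → ℝ),
        (∀ k, ttil k ∈ convexHull ℝ (Set.range θhat)) ∧
        (∀ j, 0 < ∑ k, w k * f j (ttil k)) ∧
        -(1 / (p : ℝ)) * ∑ j, Real.log (∑ k, w k * f j (ttil k)) ≤
          -(1 / (p : ℝ)) * ∑ j, Real.log (∑ k, w k * f j (t k)) := by
    intro q w t hw hw1 hpos
    have key : ∀ x : Fin d → ℝ, ∃ v ∈ convexHull ℝ (Set.range θhat), ∀ j,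
        dotProduct (θhat j - v) ((S⁻¹).mulVec (θhat j - v)) ≤
        dotProduct (θhat j - x) ((S⁻¹).mulVec (θhat j - x)) := by
      intro x
      obtain ⟨v, hv, hle⟩ := @auxProjStmt16 (Fin d → ℝ)
        (S⁻¹.toNormedAddCommGroup hSinv)
        (S⁻¹.toInnerProductSpace hSinv.posSemidef)
        (inferInstanceAs (FiniteDimensional ℝ (Fin d → ℝ)))
        _ (Set.finite_range θhat) ⟨θhat ⟨0, hp⟩, Set.mem_range_self _⟩ x
      exact ⟨v, hv, fun j => by
        have h1 := hle (θhat j) (Set.mem_range_self j)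
        change dotProduct (S⁻¹.mulVec _) (star _) ≤ dotProduct (S⁻¹.mulVec _) (star _) at h1
        simp only [star_trivial] at h1
        rwa [dotProduct_comm _ (θhat j - v), dotProduct_comm _ (θhat j - x)] at h1⟩
    choose ttil hmem hqd using fun k => key (t k)
    have hqnn : ∀ (x : Fin d → ℝ),
        (0:ℝ) ≤ dotProduct x ((S⁻¹).mulVec x) := fun x => by
      have h1 := @auxInnerNonnegStmt16 (Fin d → ℝ)
        (S⁻¹.toNormedAddCommGroup hSinv)
        (S⁻¹.toInnerProductSpace hSinv.posSemidef) x
      change 0 ≤ dotProduct (S⁻¹.mulVec x) (star x) at h1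
      simp only [star_trivial] at h1
      rwa [dotProduct_comm] at h1
    have hfle : ∀ j k, f j (t k) ≤ f j (ttil k) := by
      intro j k
      rw [hf, hf]
      exact mul_le_mul_of_nonneg_right
        (hanti j (hqnn _) (hqnn _) (hqd k j)) (hu j)
    have hsum : ∀ j, (∑ k, w k * f j (t k)) ≤ ∑ k, w k * f j (ttil k) := fun j =>
      Finset.sum_le_sum fun k _ => mul_le_mul_of_nonneg_left (hfle j k) (hw k)
    have hpos' : ∀ j, 0 < ∑ k, w k * f j (ttil k) := fun j =>
      (hpos j).trans_le (hsum j)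
    refine ⟨ttil, hmem, hpos', ?_⟩
    have hlog : (∑ j, Real.log (∑ k, w k * f j (t k))) ≤
        ∑ j, Real.log (∑ k, w k * f j (ttil k)) :=
      Finset.sum_le_sum fun j _ => Real.log_le_log (hpos j) (hsum j)
    have hps : (0:ℝ) ≤ 1 / p := by positivity
    nlinarith [hlog]
  refine ⟨main, ?_⟩
  refine sInfEqOfDomStmt16 _ _ ?_ ?_
  · rintro r ⟨m, w, t, hw, hw1, hmem, hpos, rfl⟩
    exact ⟨m, w, t, hw, hw1, fun k => Set.mem_univ _, hpos, rfl⟩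
  · rintro r ⟨m, w, t, hw, hw1, -, hpos, rfl⟩
    obtain ⟨ttil, hmem, hpos', hle⟩ := main m w t hw hw1 hpos
    exact ⟨_, ⟨m, w, ttil, hw, hw1, hmem, hpos', rfl⟩, hle⟩
end
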